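/- Let d ≥ 1 and let λ_1, …, λ_d be complex numbers. Then limsup_{m→∞} |λ_1^m + λ_2^m + ⋯ + λ_d^m|^{1/m} = max_{1 ≤ i ≤ d} |λ_i|. -/

import Mathlib

open Filter Matrix

/-- Vandermonde lower bound: if `μ j` are distinct and `n j ≥ 1`, then `|μ j0|^m` is
controlled by the power sums `∑ j, n j * μ j ^ (m+k)` for `k < e`. -/
lemma vand_bound {e : ℕ} (he : 0 < e) (μ : Fin e → ℂ) (hμ : Function.Injective μ)
    (n : Fin e → ℕ) (hn : ∀ j, 1 ≤ n j) (j0 : Fin e) :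
    ∃ C > (0:ℝ), ∀ m : ℕ, ∃ k : Fin e,
      ‖μ j0‖ ^ m ≤ C * ‖∑ j, (n j : ℂ) * μ j ^ (m + (k : ℕ))‖ := by
  classical
  have hne : Nonempty (Fin e) := Fin.pos_iff_nonempty.mp he
  set A : Matrix (Fin e) (Fin e) ℂ := (Matrix.vandermonde μ)ᵀ with hA
  have hdet : A.det ≠ 0 := by
    rw [hA, Matrix.det_transpose]
    exact Matrix.det_vandermonde_ne_zero_iff.mpr hμ
  set B := A⁻¹ with hB
  have hBA : B * A = 1 := Matrix.nonsing_inv_mul A (isUnit_iff_ne_zero.mpr hdet)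
  refine ⟨(∑ k, ‖B j0 k‖) + 1, by positivity, fun m => ?_⟩
  set w : Fin e → ℂ := fun k => ∑ j, (n j : ℂ) * μ j ^ (m + (k : ℕ)) with hw
  set v : Fin e → ℂ := fun j => (n j : ℂ) * μ j ^ m with hv
  have hAv : A.mulVec v = w := by
    funext k
    simp only [Matrix.mulVec, dotProduct, hA, Matrix.transpose_apply,
      Matrix.vandermonde_apply, hv, hw]
    refine Finset.sum_congr rfl fun j _ => ?_
    rw [pow_add]; ring
  have hvB : v = B.mulVec w := by
    rw [← hAv, Matrix.mulVec_mulVec, hBA, Matrix.one_mulVec]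
  obtain ⟨k, -, hk⟩ := Finset.exists_mem_eq_sup' (Finset.univ_nonempty)
      (fun k : Fin e => ‖w k‖)
  refine ⟨k, ?_⟩
  have hwk : ∀ k', ‖w k'‖ ≤ ‖w k‖ := by
    intro k'
    rw [← hk]
    exact Finset.le_sup' (fun k : Fin e => ‖w k‖) (Finset.mem_univ k')
  have h1 : ‖μ j0‖ ^ m ≤ ‖v j0‖ := by
    rw [hv]
    simp only [norm_mul, norm_pow, Complex.norm_natCast]
    have h1' : (1:ℝ) ≤ (n j0 : ℝ) := by exact_mod_cast hn j0
    have := pow_nonneg (norm_nonneg (μ j0)) m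
    nlinarith
  have h2 : ‖v j0‖ ≤ (∑ k', ‖B j0 k'‖) * ‖w k‖ := by
    rw [hvB]
    calc ‖B.mulVec w j0‖ = ‖∑ k', B j0 k' * w k'‖ := rfl
      _ ≤ ∑ k', ‖B j0 k' * w k'‖ := norm_sum_le _ _
      _ = ∑ k', ‖B j0 k'‖ * ‖w k'‖ := by simp [norm_mul]
      _ ≤ ∑ k', ‖B j0 k'‖ * ‖w k‖ := by
          exact Finset.sum_le_sum fun k' _ =>
            mul_le_mul_of_nonneg_left (hwk k') (norm_nonneg _)
      _ = (∑ k', ‖B j0 k'‖) * ‖w k‖ := by rw [Finset.sum_mul]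
  have h3 : (∑ k', ‖B j0 k'‖) * ‖w k‖
      ≤ ((∑ k', ‖B j0 k'‖) + 1) * ‖w k‖ :=
    mul_le_mul_of_nonneg_right (by linarith) (norm_nonneg _)
  exact h1.trans (h2.trans h3)

/-- For complex numbers `λ_1, …, λ_d` (`d ≥ 1`),
`limsup_{m→∞} |λ_1^m + ⋯ + λ_d^m|^{1/m} = max_{1 ≤ i ≤ d} |λ_i|`. -/
theorem stmt3 (d : ℕ) (hd : 1 ≤ d) (l : Fin d → ℂ) :
    Filter.limsup
      (fun m : ℕ => ‖∑ i : Fin d, (l i) ^ m‖ ^ ((m : ℝ)⁻¹)) Filter.atTop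
      = Finset.univ.sup'
          (Finset.univ_nonempty_iff.mpr (Fin.pos_iff_nonempty.mp hd))
          (fun i => ‖l i‖) := by
  classical
  have hne : Nonempty (Fin d) := Fin.pos_iff_nonempty.mp hd
  set u : ℕ → ℝ := fun m => ‖∑ i : Fin d, (l i) ^ m‖ ^ ((m : ℝ)⁻¹) with hu
  set R : ℝ := Finset.univ.sup'
      (Finset.univ_nonempty_iff.mpr (Fin.pos_iff_nonempty.mp hd))
      (fun i => ‖l i‖) with hRdef
  have hRle : ∀ i, ‖l i‖ ≤ R := fun i =>
    Finset.le_sup' (fun i => ‖l i‖) (Finset.mem_univ i)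
  obtain ⟨i0, -, hi0⟩ := Finset.exists_mem_eq_sup'
      (Finset.univ_nonempty_iff.mpr (Fin.pos_iff_nonempty.mp hd))
      (fun i => ‖l i‖)
  have hR0 : 0 ≤ R := by rw [hRdef, hi0]; exact norm_nonneg _
  have hsum_le : ∀ m : ℕ, ‖∑ i : Fin d, (l i) ^ m‖ ≤ d * R ^ m := by
    intro m
    calc ‖∑ i : Fin d, (l i) ^ m‖ ≤ ∑ i : Fin d, ‖(l i) ^ m‖ :=
        norm_sum_le _ _
      _ = ∑ i : Fin d, ‖l i‖ ^ m := by simp [norm_pow]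
      _ ≤ ∑ _i : Fin d, R ^ m :=
        Finset.sum_le_sum fun i _ => pow_le_pow_left₀ (norm_nonneg _) (hRle i) m
      _ = d * R ^ m := by simp [Finset.sum_const, mul_comm, Finset.card_univ]
  rcases eq_or_lt_of_le hR0 with hR | hR
  · -- R = 0 : all λ are zero
    have hall : ∀ i, l i = 0 := by
      intro i
      have := hRle i
      rw [← hR] at this
      exact norm_eq_zero.mp (le_antisymm this (norm_nonneg _))
    have hev : ∀ᶠ m in atTop, u m = 0 := by
      filter_upwards [eventually_ge_atTop 1] with m hm
      have hm0 : m ≠ 0 := by omega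
      have : ((m:ℝ)⁻¹) ≠ 0 := inv_ne_zero (Nat.cast_ne_zero.mpr hm0)
      simp [hu, hall, zero_pow hm0, Real.zero_rpow this]
    rw [← hR]
    calc limsup u atTop = limsup (fun _ : ℕ => (0:ℝ)) atTop :=
        limsup_congr hev
      _ = 0 := limsup_const 0
  · -- R > 0
    have hu_nonneg : ∀ m, 0 ≤ u m := fun m => Real.rpow_nonneg (norm_nonneg _) _
    have hcobdd : IsCoboundedUnder (· ≤ ·) atTop u :=
      isCoboundedUnder_le_of_le atTop hu_nonneg
    have hbdd : IsBoundedUnder (· ≤ ·) atTop u := by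
      refine ⟨d * (R + 1), ?_⟩
      rw [eventually_map]
      filter_upwards [eventually_ge_atTop 1] with m hm
      have hm0 : m ≠ 0 := by omega
      have hd1 : (1:ℝ) ≤ (d:ℝ) := by exact_mod_cast hd
      have h1 : ‖∑ i : Fin d, (l i) ^ m‖ ≤ (d * (R + 1)) ^ m := by
        refine (hsum_le m).trans ?_
        rw [mul_pow]
        have hdm : (d:ℝ) ≤ (d:ℝ) ^ m := le_self_pow₀ hd1 hm0
        have hRm : R ^ m ≤ (R + 1) ^ m := pow_le_pow_left₀ hR0 (by linarith) m
        have := pow_nonneg hR0 m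
        nlinarith [pow_nonneg (le_trans zero_le_one hd1) m,
          pow_nonneg (by linarith : (0:ℝ) ≤ R + 1) m]
      calc u m ≤ ((d * (R + 1)) ^ m) ^ ((m:ℝ)⁻¹) :=
          Real.rpow_le_rpow (norm_nonneg _) h1 (by positivity)
        _ = d * (R + 1) := Real.pow_rpow_inv_natCast (by positivity) hm0
    have hup : limsup u atTop ≤ R := by
      refine le_of_forall_gt_imp_ge_of_dense fun c hc => ?_
      have hc0 : 0 < c := lt_trans hR hc
      have hquot : 1 < c / R := (one_lt_div hR).mpr hc
      have htend : Tendsto (fun m : ℕ => (c / R) ^ m) atTop atTop :=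
        tendsto_pow_atTop_atTop_of_one_lt hquot
      refine limsup_le_of_le hcobdd ?_
      filter_upwards [htend.eventually_ge_atTop (d : ℝ), eventually_ge_atTop 1] with m hm hm1
      have hm0 : m ≠ 0 := by omega
      have h1 : ‖∑ i : Fin d, (l i) ^ m‖ ≤ c ^ m := by
        refine (hsum_le m).trans ?_
        have := pow_nonneg hR0 m
        calc (d:ℝ) * R ^ m ≤ (c / R) ^ m * R ^ m :=
            mul_le_mul_of_nonneg_right hm this
          _ = c ^ m := by rw [← mul_pow, div_mul_cancel₀ _ (ne_of_gt hR)]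
      calc u m ≤ (c ^ m) ^ ((m:ℝ)⁻¹) :=
          Real.rpow_le_rpow (norm_nonneg _) h1 (by positivity)
        _ = c := Real.pow_rpow_inv_natCast hc0.le hm0
    have hlo : R ≤ limsup u atTop := by
      -- set up the distinct values of l
      set S : Finset ℂ := Finset.univ.image l with hS
      have hi0S : l i0 ∈ S := Finset.mem_image_of_mem l (Finset.mem_univ i0)
      have hSne : S.Nonempty := ⟨l i0, hi0S⟩
      set e := S.card with hecard
      have he : 0 < e := Finset.card_pos.mpr hSne
      set μ : Fin e → ℂ := fun k => ((S.equivFin.symm k : S) : ℂ) with hμdef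
      have hμinj : Function.Injective μ := fun a b h =>
        S.equivFin.symm.injective (Subtype.ext h)
      set n : Fin e → ℕ := fun k => (Finset.univ.filter (fun i => l i = μ k)).card with hn_def
      have hn : ∀ k, 1 ≤ n k := by
        intro k
        have hmem : μ k ∈ S := (S.equivFin.symm k).2
        rw [hS, Finset.mem_image] at hmem
        obtain ⟨i, -, hi⟩ := hmem
        exact Finset.card_pos.mpr ⟨i, Finset.mem_filter.mpr ⟨Finset.mem_univ i, hi⟩⟩
      set j0 : Fin e := S.equivFin ⟨l i0, hi0S⟩ with hj0
      have hμj0 : μ j0 = l i0 := by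
        show ((S.equivFin.symm (S.equivFin ⟨l i0, hi0S⟩) : S) : ℂ) = l i0
        rw [Equiv.symm_apply_apply]
      have hdecomp : ∀ m : ℕ, (∑ i : Fin d, (l i) ^ m) = ∑ k : Fin e, (n k : ℂ) * μ k ^ m := by
        intro m
        rw [Finset.sum_comp (fun z : ℂ => z ^ m) l, ← hS]
        rw [← Finset.sum_coe_sort S (fun b => (Finset.univ.filter (fun a => l a = b)).card • b ^ m)]
        rw [← Equiv.sum_comp S.equivFin.symm
          (fun b : S => (Finset.univ.filter (fun a => l a = (b : ℂ))).card • (b : ℂ) ^ m)]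
        refine Finset.sum_congr rfl fun k _ => ?_
        simp [hn_def, hμdef, nsmul_eq_mul]
      obtain ⟨C, hC, hCprop⟩ := vand_bound he μ hμinj n hn j0
      refine le_of_forall_lt fun a ha => ?_
      -- choose r with a < r < R, 0 < r
      set b : ℝ := max a (R / 2) with hbdef
      have hbR : b < R := max_lt ha (by linarith)
      have hb0 : 0 < b := lt_of_lt_of_le (by linarith) (le_max_right _ _)
      set r : ℝ := (b + R) / 2 with hrdef
      have hbr : b < r := by rw [hrdef]; linarith
      have hrR : r < R := by rw [hrdef]; linarith
      have hr0 : 0 < r := by linarith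
      have har : a < r := lt_of_le_of_lt (le_max_left _ _) hbr
      refine lt_of_lt_of_le har (le_limsup_of_frequently_le ?_ hbdd)
      rw [frequently_atTop]
      intro N
      -- pick m ≥ max N 1 with (R/r)^m ≥ C * (r+1)^e
      have hquot : 1 < R / r := (one_lt_div hr0).mpr hrR
      have htend : Tendsto (fun m : ℕ => (R / r) ^ m) atTop atTop :=
        tendsto_pow_atTop_atTop_of_one_lt hquot
      obtain ⟨m, hmN, hmbig⟩ :=
        ((htend.eventually_ge_atTop (C * (r + 1) ^ e)).and (eventually_ge_atTop (max N 1))).exists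
      obtain ⟨k, hk⟩ := hCprop m
      rw [hμj0, ← hi0] at hk
      refine ⟨m + (k : ℕ), le_trans (le_trans (le_max_left N 1) hmbig) (Nat.le_add_right m _), ?_⟩
      have hm1 : 1 ≤ m := le_trans (le_max_right N 1) hmbig
      have hmk0 : m + (k : ℕ) ≠ 0 := by omega
      -- show r ^ (m+k) ≤ |s (m+k)|
      have hsk : r ^ (m + (k : ℕ)) ≤ ‖∑ i : Fin d, (l i) ^ (m + (k : ℕ))‖ := by
        have hstep1 : C * (r + 1) ^ e * r ^ m ≤ R ^ m := by
          calc C * (r + 1) ^ e * r ^ m ≤ (R / r) ^ m * r ^ m :=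
              mul_le_mul_of_nonneg_right hmN (pow_nonneg hr0.le m)
            _ = R ^ m := by rw [← mul_pow, div_mul_cancel₀ _ (ne_of_gt hr0)]
        have hstep2 : R ^ m ≤ C * ‖∑ j : Fin e, (n j : ℂ) * μ j ^ (m + (k:ℕ))‖ := hk
        have hstep3 : (r + 1) ^ e * r ^ m
            ≤ ‖∑ j : Fin e, (n j : ℂ) * μ j ^ (m + (k:ℕ))‖ := by
          have := hstep1.trans hstep2
          rw [mul_assoc] at this
          exact le_of_mul_le_mul_left this hC
        have hrk : r ^ (m + (k : ℕ)) ≤ (r + 1) ^ e * r ^ m := by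
          rw [pow_add, mul_comm (r ^ m)]
          refine mul_le_mul_of_nonneg_right ?_ (pow_nonneg hr0.le m)
          calc r ^ (k : ℕ) ≤ (r + 1) ^ (k : ℕ) :=
              pow_le_pow_left₀ hr0.le (by linarith) _
            _ ≤ (r + 1) ^ e := pow_le_pow_right₀ (by linarith) (le_of_lt k.2)
        rw [hdecomp (m + (k : ℕ))]
        exact (hrk.trans hstep3)
      calc r = (r ^ (m + (k:ℕ))) ^ (((m + (k:ℕ) : ℕ) : ℝ)⁻¹) :=
          (Real.pow_rpow_inv_natCast hr0.le hmk0).symm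
        _ ≤ u (m + (k:ℕ)) :=
          Real.rpow_le_rpow (pow_nonneg hr0.le _) hsk (by positivity)
    exact le_antisymm hup hlo
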